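/- Fix σ > 0. Let Q be a set of Schwartz functions q : ℝ → ℂ that is bounded in L²(ℝ) and L²-equicontinuous, i.e., for every ε > 0 there exists δ > 0 such that sup_{q ∈ Q} sup_{|y| < δ} ‖q(· + y) − q(·)‖_{L²(ℝ)} < ε. Then lim_{κ → ∞} sup_{q ∈ Q} ∫_ℝ |ξ|^{2σ} (4κ² + ξ²)^{−σ} |q̂(ξ)|² dξ = 0. -/

import Mathlib

open MeasureTheory

/-- The Fourier transform, normalized by `q̂(ξ) = (2π)^{-1/2} ∫ e^{-iξx} q(x) dx`. -/
noncomputable def fhat (f : ℝ → ℂ) (ξ : ℝ) : ℂ :=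
  ((Real.sqrt (2 * Real.pi) : ℂ))⁻¹
    * ∫ x : ℝ, Complex.exp (-(Complex.I * (ξ : ℂ) * (x : ℂ))) * f x

open FourierTransform Real Complex Filter Topology
open scoped RealInnerProductSpace


lemma fhat_eq (f : ℝ → ℂ) (ξ : ℝ) :
    fhat f ξ = ((Real.sqrt (2 * Real.pi) : ℂ))⁻¹ * 𝓕 f (ξ / (2 * Real.pi)) := by
  rw [fhat, Real.fourier_real_eq_integral_exp_smul]
  congr 1
  refine integral_congr_ae (.of_forall fun x => ?_)
  have hπ : (2 : ℝ) * Real.pi ≠ 0 := by positivity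
  show Complex.exp (-(Complex.I * ξ * x)) * f x
      = Complex.exp (((-2 * Real.pi * x * (ξ / (2 * Real.pi)) : ℝ) : ℂ) * Complex.I) • f x
  rw [smul_eq_mul]
  have h2 : (-2 * Real.pi * x * (ξ / (2 * Real.pi)) : ℝ) = -(ξ * x) := by
    field_simp
  rw [h2]
  push_cast
  ring

lemma fhat_translate (f : ℝ → ℂ) (y ξ : ℝ) :
    fhat (fun x => f (x + y)) ξ = Complex.exp (Complex.I * ξ * y) * fhat f ξ := by
  rw [fhat, fhat]
  have h : (fun x : ℝ => Complex.exp (-(Complex.I * ξ * x)) * f (x + y))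
      = (fun x : ℝ => (fun u : ℝ => Complex.exp (Complex.I * ξ * y) * (Complex.exp (-(Complex.I * ξ * u)) * f u)) (x + y)) := by
    funext x
    show _ = Complex.exp (Complex.I * ξ * y) * (Complex.exp (-(Complex.I * ξ * (x + y : ℝ))) * f (x + y))
    rw [← mul_assoc, ← Complex.exp_add]
    congr 2
    push_cast
    ring
  rw [h, MeasureTheory.integral_add_right_eq_self
    (fun u : ℝ => Complex.exp (Complex.I * ξ * y) * (Complex.exp (-(Complex.I * ξ * u)) * f u)) y,
    MeasureTheory.integral_const_mul]
  ring


lemma conj_integrable {f : ℝ → ℂ} (h : Integrable f) :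
    Integrable (fun x => (starRingEnd ℂ) (f x)) := by
  refine h.norm.mono' (Complex.continuous_conj.comp_aestronglyMeasurable h.1) ?_
  filter_upwards with x; simp

lemma flip_innerL : (innerₗ ℝ).flip = innerₗ ℝ :=
  LinearMap.ext fun x => LinearMap.ext fun y => real_inner_comm x y

lemma mul_conj_self (z : ℂ) : z * (starRingEnd ℂ) z = ((‖z‖ ^ 2 : ℝ) : ℂ) := by
  rw [Complex.mul_conj]
  norm_cast
  rw [Complex.normSq_eq_norm_sq]

lemma cintegral_ofReal {f : ℝ → ℝ} {μ : Measure ℝ} :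
    ∫ x, ((f x : ℝ) : ℂ) ∂μ = ((∫ x, f x ∂μ : ℝ) : ℂ) :=
  integral_ofReal

/-- Plancherel for the mathlib Fourier transform, for nice functions. -/
lemma planch_F (f : ℝ → ℂ) (hc : Continuous f) (hf : Integrable f)
    (hFf : Integrable (𝓕 f)) :
    ∫ ξ : ℝ, (‖𝓕 f ξ‖ ^ 2 : ℝ) = ∫ x : ℝ, (‖f x‖ ^ 2 : ℝ) := by
  set g : ℝ → ℂ := fun ξ => (starRingEnd ℂ) (𝓕 f ξ) with hg_def
  have hg : Integrable g := conj_integrable hFf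
  have key := VectorFourier.integral_fourierIntegral_smul_eq_flip
    (e := Real.fourierChar) (L := innerₗ ℝ) (μ := (volume : Measure ℝ)) (ν := (volume : Measure ℝ))
    Real.continuous_fourierChar continuous_inner hf hg
  rw [flip_innerL] at key
  have hFg : ∀ x : ℝ, VectorFourier.fourierIntegral Real.fourierChar volume (innerₗ ℝ) g x
      = (starRingEnd ℂ) (f x) := by
    intro x
    have hinv : 𝓕⁻ (𝓕 f) x = f x := hf.fourierInv_fourier_eq hFf hc.continuousAt
    have : VectorFourier.fourierIntegral Real.fourierChar volume (innerₗ ℝ) g x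
        = (starRingEnd ℂ) (𝓕⁻ (𝓕 f) x) := by
      rw [Real.fourierInv_eq, ← integral_conj]
      show (∫ ξ : ℝ, (Real.fourierChar (-(innerₗ ℝ) ξ x) : ℂ) * g ξ) = _
      refine integral_congr_ae (.of_forall fun ξ => ?_)
      show (Real.fourierChar (-(innerₗ ℝ) ξ x) : ℂ) * (starRingEnd ℂ) (𝓕 f ξ)
          = (starRingEnd ℂ) ((Real.fourierChar ⟪ξ, x⟫ : ℂ) * (𝓕 f ξ))
      rw [map_mul]
      congr 1
      rw [Real.fourierChar_apply, Real.fourierChar_apply, ← Complex.exp_conj]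
      congr 1
      simp only [map_mul, Complex.conj_ofReal, Complex.conj_I, innerₗ_apply_apply]
      push_cast
      ring
    rw [this, hinv]
  have keyC : (∫ ξ : ℝ, ((‖𝓕 f ξ‖ ^ 2 : ℝ) : ℂ)) = ∫ x : ℝ, ((‖f x‖ ^ 2 : ℝ) : ℂ) := by
    calc (∫ ξ : ℝ, ((‖𝓕 f ξ‖ ^ 2 : ℝ) : ℂ))
        = ∫ ξ : ℝ, 𝓕 f ξ • g ξ := by
          refine integral_congr_ae (.of_forall fun ξ => ?_)
          show ((‖𝓕 f ξ‖ ^ 2 : ℝ) : ℂ) = 𝓕 f ξ • g ξ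
          rw [smul_eq_mul, mul_conj_self]
      _ = ∫ x : ℝ, f x • (VectorFourier.fourierIntegral Real.fourierChar volume (innerₗ ℝ) g x) := key
      _ = ∫ x : ℝ, ((‖f x‖ ^ 2 : ℝ) : ℂ) := by
          refine integral_congr_ae (.of_forall fun x => ?_)
          show f x • (VectorFourier.fourierIntegral Real.fourierChar volume (innerₗ ℝ) g x) = _
          rw [hFg x, smul_eq_mul, mul_conj_self]
  rw [cintegral_ofReal, cintegral_ofReal] at keyC
  exact_mod_cast keyC


lemma norm_fhat_sq (f : ℝ → ℂ) (ξ : ℝ) :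
    ‖fhat f ξ‖ ^ 2 = (2 * Real.pi)⁻¹ * ‖𝓕 f ((2 * Real.pi)⁻¹ * ξ)‖ ^ 2 := by
  have h2π : (0:ℝ) ≤ 2 * Real.pi := by positivity
  rw [fhat_eq, norm_mul, mul_pow, div_eq_inv_mul]
  congr 1
  rw [norm_inv, Complex.norm_real, Real.norm_eq_abs, _root_.abs_of_nonneg (Real.sqrt_nonneg _),
    inv_pow, Real.sq_sqrt h2π]

lemma planch_fhat (f : ℝ → ℂ) (hc : Continuous f) (hf : Integrable f)
    (hFf : Integrable (𝓕 f)) :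
    ∫ ξ : ℝ, (‖fhat f ξ‖ ^ 2 : ℝ) = ∫ x : ℝ, (‖f x‖ ^ 2 : ℝ) := by
  have h2π : (0:ℝ) < 2 * Real.pi := by positivity
  calc ∫ ξ : ℝ, (‖fhat f ξ‖ ^ 2 : ℝ)
      = ∫ ξ : ℝ, (2 * Real.pi)⁻¹ * (fun u => ‖𝓕 f u‖ ^ 2) ((2 * Real.pi)⁻¹ * ξ) := by
        simp_rw [norm_fhat_sq]
    _ = (2 * Real.pi)⁻¹ * ∫ ξ : ℝ, (fun u => ‖𝓕 f u‖ ^ 2) ((2 * Real.pi)⁻¹ * ξ) :=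
        MeasureTheory.integral_const_mul _ _
    _ = (2 * Real.pi)⁻¹ * (|2 * Real.pi| • ∫ u : ℝ, ‖𝓕 f u‖ ^ 2) := by
        rw [Measure.integral_comp_inv_mul_left (fun u => ‖𝓕 f u‖ ^ 2) (2 * Real.pi)]
    _ = ∫ u : ℝ, ‖𝓕 f u‖ ^ 2 := by
        rw [abs_of_pos h2π, smul_eq_mul, ← mul_assoc, inv_mul_cancel₀ h2π.ne', one_mul]
    _ = _ := planch_F f hc hf hFf


noncomputable def scaleCLM : ℝ →L[ℝ] ℝ := (2 * Real.pi)⁻¹ • ContinuousLinearMap.id ℝ ℝ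

/-- `fhat` of a Schwartz function, as a Schwartz function. -/
noncomputable def fhatS (q : SchwartzMap ℝ ℂ) : SchwartzMap ℝ ℂ :=
  ((Real.sqrt (2 * Real.pi) : ℂ))⁻¹ •
    (SchwartzMap.compCLM (𝕜 := ℂ) (g := fun ξ : ℝ => (2 * Real.pi)⁻¹ * ξ)
      (scaleCLM.hasTemperateGrowth)
      ⟨1, 2 * Real.pi, fun x => by
        have h2π : (0:ℝ) < 2 * Real.pi := by positivity
        rw [pow_one, norm_mul, norm_inv, Real.norm_eq_abs (2 * Real.pi), abs_of_pos h2π,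
          mul_add, mul_one, ← mul_assoc, mul_inv_cancel₀ h2π.ne', one_mul]
        linarith [h2π]⟩
      (FourierTransform.fourierCLE ℂ (SchwartzMap ℝ ℂ) q))

lemma fhatS_apply (q : SchwartzMap ℝ ℂ) (ξ : ℝ) : fhatS q ξ = fhat (⇑q) ξ := by
  rw [fhat_eq]
  show ((Real.sqrt (2 * Real.pi) : ℂ))⁻¹ •
      ((FourierTransform.fourierCLE ℂ (SchwartzMap ℝ ℂ) q) ((2 * Real.pi)⁻¹ * ξ)) = _
  rw [smul_eq_mul]
  congr 1
  rw [FourierTransform.fourierCLE_apply, SchwartzMap.fourier_coe]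
  congr 1
  rw [div_eq_inv_mul]

lemma cont_fhat (q : SchwartzMap ℝ ℂ) : Continuous (fhat ⇑q) := by
  have : Continuous (fhatS q) := (fhatS q).continuous
  refine this.congr fun ξ => fhatS_apply q ξ

lemma integrable_fhat_sq (q : SchwartzMap ℝ ℂ) :
    Integrable (fun ξ : ℝ => (‖fhat ⇑q ξ‖ ^ 2 : ℝ)) := by
  set C := (SchwartzMap.seminorm ℝ 0 0) (fhatS q) with hC
  have hCnn : 0 ≤ C := apply_nonneg _ _
  refine (((fhatS q).integrable.norm.const_mul C).mono'
    ((cont_fhat q).norm.pow 2).aestronglyMeasurable ?_)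
  filter_upwards with ξ
  rw [Real.norm_eq_abs, _root_.abs_of_nonneg (by positivity), pow_two, ← fhatS_apply]
  exact mul_le_mul_of_nonneg_right (SchwartzMap.norm_le_seminorm ℝ _ _) (norm_nonneg _)

lemma integrable_mul_exp (f : ℝ → ℂ) (hf : Integrable f) (ξ : ℝ) :
    Integrable (fun x : ℝ => Complex.exp (-(Complex.I * ξ * x)) * f x) := by
  refine hf.norm.mono' (((Complex.continuous_exp.comp (by continuity)).aestronglyMeasurable).mul hf.1) ?_
  filter_upwards with x
  rw [norm_mul, Complex.norm_exp]
  simp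

lemma fhat_sub (f g : ℝ → ℂ) (hf : Integrable f) (hg : Integrable g) (ξ : ℝ) :
    fhat (fun x => f x - g x) ξ = fhat f ξ - fhat g ξ := by
  rw [fhat, fhat, fhat]
  rw [show (fun x : ℝ => Complex.exp (-(Complex.I * ξ * x)) * (f x - g x))
      = fun x : ℝ => Complex.exp (-(Complex.I * ξ * x)) * f x
        - Complex.exp (-(Complex.I * ξ * x)) * g x from funext fun x => by ring,
    integral_sub (integrable_mul_exp f hf ξ) (integrable_mul_exp g hg ξ)]
  ring

lemma fhat_diff (q : SchwartzMap ℝ ℂ) (y : ℝ) (ξ : ℝ) :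
    fhat (fun x => q (x + y) - q x) ξ
      = (Complex.exp (Complex.I * ξ * y) - 1) * fhat ⇑q ξ := by
  rw [fhat_sub (fun x => q (x + y)) (⇑q) (q.integrable.comp_add_right y) q.integrable,
    fhat_translate (⇑q) y ξ]
  ring


lemma sqrt2pi_ne : ((Real.sqrt (2 * Real.pi) : ℂ)) ≠ 0 := by
  have : (0:ℝ) < Real.sqrt (2 * Real.pi) := Real.sqrt_pos.2 (by positivity)
  exact_mod_cast this.ne'

lemma norm_exp_I_mul (t : ℂ) (ht : t.re = 0) : ‖Complex.exp t‖ = 1 := by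
  rw [Complex.norm_exp, ht, Real.exp_zero]

lemma d_cont (q : SchwartzMap ℝ ℂ) (y : ℝ) : Continuous fun x => q (x + y) - q x :=
  (q.continuous.comp (continuous_id.add continuous_const)).sub q.continuous

lemma d_int (q : SchwartzMap ℝ ℂ) (y : ℝ) : Integrable fun x => q (x + y) - q x :=
  (q.integrable.comp_add_right y).sub q.integrable

lemma F_diff (q : SchwartzMap ℝ ℂ) (y w : ℝ) :
    𝓕 (fun x => q (x + y) - q x) w
      = (Complex.exp (Complex.I * (2 * Real.pi * w) * y) - 1) * 𝓕 ⇑q w := by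
  have h2π : (2:ℝ) * Real.pi ≠ 0 := by positivity
  have h1 := fhat_eq (fun x => q (x + y) - q x) (2 * Real.pi * w)
  have h2 := fhat_diff q y (2 * Real.pi * w)
  have h3 := fhat_eq (⇑q) (2 * Real.pi * w)
  rw [mul_div_cancel_left₀ w h2π] at h1 h3
  rw [h1, h3] at h2
  push_cast at h2
  rw [show (Complex.exp (Complex.I * (2 * Real.pi * w) * y) - 1)
        * (((Real.sqrt (2 * Real.pi) : ℂ))⁻¹ * 𝓕 (⇑q) w)
      = ((Real.sqrt (2 * Real.pi) : ℂ))⁻¹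
        * ((Complex.exp (Complex.I * (2 * Real.pi * w) * y) - 1) * 𝓕 (⇑q) w) from by ring] at h2
  exact mul_left_cancel₀ (inv_ne_zero sqrt2pi_ne) h2

lemma integrable_F_diff (q : SchwartzMap ℝ ℂ) (y : ℝ) :
    Integrable (𝓕 fun x => q (x + y) - q x) := by
  have hG : Integrable (𝓕 ⇑q) := by
    have := (FourierTransform.fourierCLE ℂ (SchwartzMap ℝ ℂ) q).integrable (μ := volume)
    rwa [FourierTransform.fourierCLE_apply, SchwartzMap.fourier_coe] at this
  have hGc : Continuous (𝓕 ⇑q) := by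
    have := (FourierTransform.fourierCLE ℂ (SchwartzMap ℝ ℂ) q).continuous
    rwa [FourierTransform.fourierCLE_apply, SchwartzMap.fourier_coe] at this
  have hrhs : Integrable (fun w : ℝ =>
      (Complex.exp (Complex.I * (2 * Real.pi * w) * y) - 1) * 𝓕 ⇑q w) := by
    refine (hG.norm.const_mul 2).mono'
      ((((Complex.continuous_exp.comp (by continuity)).sub continuous_const).mul hGc).aestronglyMeasurable) ?_
    filter_upwards with w
    rw [norm_mul]
    refine mul_le_mul_of_nonneg_right ?_ (norm_nonneg _)
    calc ‖Complex.exp (Complex.I * (2 * Real.pi * w) * y) - 1‖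
        ≤ ‖Complex.exp (Complex.I * (2 * Real.pi * w) * y)‖ + ‖(1:ℂ)‖ := norm_sub_le _ _
      _ ≤ 2 := by
          rw [norm_exp_I_mul _ (by simp), norm_one]
          norm_num
  exact hrhs.congr (Filter.EventuallyEq.of_eq (funext fun w => (F_diff q y w).symm))

lemma diff_identity (q : SchwartzMap ℝ ℂ) (y : ℝ) :
    ∫ ξ : ℝ, (‖Complex.exp (Complex.I * ξ * y) - 1‖ ^ 2 * ‖fhat ⇑q ξ‖ ^ 2 : ℝ)
      = ∫ x : ℝ, (‖q (x + y) - q x‖ ^ 2 : ℝ) := by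
  rw [← planch_fhat (fun x => q (x + y) - q x) (d_cont q y) (d_int q y) (integrable_F_diff q y)]
  refine integral_congr_ae (.of_forall fun ξ => ?_)
  show _ = ‖fhat (fun x => q (x + y) - q x) ξ‖ ^ 2
  rw [fhat_diff q y ξ, norm_mul, mul_pow]


lemma norm_w (y ξ : ℝ) :
    (‖Complex.exp (Complex.I * ξ * y) - 1‖ ^ 2 : ℝ) = 2 - 2 * Real.cos (ξ * y) := by
  have h1 : (Complex.I * ξ * y : ℂ) = ((ξ * y : ℝ) : ℂ) * Complex.I := by push_cast; ring
  rw [h1, Complex.sq_norm, Complex.normSq_apply]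
  simp only [Complex.sub_re, Complex.sub_im, Complex.one_re, Complex.one_im,
    Complex.exp_ofReal_mul_I_re, Complex.exp_ofReal_mul_I_im]
  nlinarith [Real.sin_sq_add_cos_sq (ξ * y)]

lemma w2_integral (δ ξ : ℝ) (hδ : 0 < δ) (hξ : ξ ≠ 0) :
    ∫ y in Set.Ioo (0:ℝ) δ, (2 - 2 * Real.cos (ξ * y)) = 2 * δ - 2 * (Real.sin (ξ * δ) / ξ) := by
  rw [← integral_Ioc_eq_integral_Ioo, ← intervalIntegral.integral_of_le hδ.le]
  have hcos : ∫ y in (0:ℝ)..δ, Real.cos (ξ * y) = Real.sin (ξ * δ) / ξ := by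
    rw [intervalIntegral.integral_comp_mul_left Real.cos hξ]
    simp [integral_cos, div_eq_inv_mul]
  have h1 : IntervalIntegrable (fun y => 2 * Real.cos (ξ * y)) volume 0 δ :=
    Continuous.intervalIntegrable (by continuity) _ _
  have h2 : IntervalIntegrable (fun _ : ℝ => (2:ℝ)) volume 0 δ := intervalIntegrable_const
  rw [show (fun y : ℝ => 2 - 2 * Real.cos (ξ * y)) = fun y : ℝ => (fun _ => (2:ℝ)) y - (fun y => 2 * Real.cos (ξ * y)) y from rfl,
    intervalIntegral.integral_sub h2 h1]
  rw [intervalIntegral.integral_const, intervalIntegral.integral_const_mul, hcos]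
  simp
  ring

lemma w2_lower (δ ξ : ℝ) (hδ : 0 < δ) (hξ : 2 / δ ≤ |ξ|) :
    δ ≤ ∫ y in Set.Ioo (0:ℝ) δ, (2 - 2 * Real.cos (ξ * y)) := by
  have h2δ : (0:ℝ) < 2 / δ := by positivity
  have hξpos : (0:ℝ) < |ξ| := lt_of_lt_of_le h2δ hξ
  have hξ0 : ξ ≠ 0 := fun h => by rw [h] at hξpos; simp at hξpos
  rw [w2_integral δ ξ hδ hξ0]
  have habs : |Real.sin (ξ * δ) / ξ| ≤ 1 / |ξ| := by
    rw [abs_div]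
    gcongr
    exact Real.abs_sin_le_one _
  have h2 : 1 / |ξ| ≤ δ / 2 := by
    rw [div_le_div_iff₀ hξpos (by norm_num : (0:ℝ) < 2)]
    calc (1:ℝ) * 2 = (2 / δ) * δ := by field_simp
      _ ≤ |ξ| * δ := by gcongr
      _ = δ * |ξ| := mul_comm _ _
  have := (abs_le.1 (habs.trans h2)).2
  linarith

lemma w_le_four (y ξ : ℝ) : (‖Complex.exp (Complex.I * ξ * y) - 1‖ ^ 2 : ℝ) ≤ 4 := by
  rw [norm_w]
  nlinarith [Real.neg_one_le_cos (ξ * y)]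


lemma tail_bound (q : SchwartzMap ℝ ℂ) (δ ε₁ : ℝ) (hδ : 0 < δ) (hε₁ : 0 ≤ ε₁)
    (hequi : ∀ y ∈ Set.Ioo (0:ℝ) δ, ∫ x : ℝ, (‖q (x + y) - q x‖ ^ 2 : ℝ) ≤ ε₁ ^ 2) :
    ∫ ξ in {ξ : ℝ | 2 / δ ≤ |ξ|}, (‖fhat ⇑q ξ‖ ^ 2 : ℝ) ≤ ε₁ ^ 2 := by
  set μ : Measure ℝ := volume.restrict (Set.Ioo 0 δ) with hμ
  set Φ : ℝ → ℝ := fun ξ => (‖fhat ⇑q ξ‖ ^ 2 : ℝ) with hΦ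
  have hΦ_int : Integrable Φ := integrable_fhat_sq q
  have hΦ_nn : ∀ ξ, 0 ≤ Φ ξ := fun ξ => by positivity
  have hΦ_cont : Continuous Φ := (cont_fhat q).norm.pow 2
  set F : ℝ × ℝ → ℝ :=
    fun p => (‖Complex.exp (Complex.I * p.2 * p.1) - 1‖ ^ 2 : ℝ) * Φ p.2 with hF
  have hF_cont : Continuous F := by
    apply Continuous.mul ?_ (hΦ_cont.comp continuous_snd)
    apply Continuous.pow
    apply Continuous.norm
    refine Continuous.sub (Complex.continuous_exp.comp ?_) continuous_const
    exact (continuous_const.mul (Complex.continuous_ofReal.comp continuous_snd)).mul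
      (Complex.continuous_ofReal.comp continuous_fst)
  have hμfin : μ (Set.univ) < ⊤ := by
    rw [hμ, Measure.restrict_apply MeasurableSet.univ, Set.univ_inter]
    exact measure_Ioo_lt_top
  have hconst : Integrable (fun _ : ℝ => (4:ℝ)) μ := by
    rw [hμ]
    exact integrableOn_const measure_Ioo_lt_top.ne
  have hdom : Integrable (fun p : ℝ × ℝ => (fun _ => (4:ℝ)) p.1 * Φ p.2) (μ.prod volume) :=
    hconst.mul_prod hΦ_int
  have hF_int : Integrable F (μ.prod volume) := by
    refine hdom.mono' hF_cont.aestronglyMeasurable ?_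
    filter_upwards with p
    rw [Real.norm_eq_abs, _root_.abs_of_nonneg (by positivity)]
    exact mul_le_mul_of_nonneg_right (w_le_four p.1 p.2) (hΦ_nn p.2)
  -- Fubini
  have hswap : ∫ y, (∫ ξ, F (y, ξ)) ∂μ = ∫ ξ, (∫ y, F (y, ξ) ∂μ) :=
    MeasureTheory.integral_integral_swap hF_int
  -- upper bound on the lhs
  have hA : ∫ y, (∫ ξ, F (y, ξ)) ∂μ ≤ δ * ε₁ ^ 2 := by
    have hmarg : Integrable (fun y => ∫ ξ, F (y, ξ)) μ := hF_int.integral_prod_left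
    have hle : ∀ y ∈ Set.Ioo (0:ℝ) δ, (∫ ξ, F (y, ξ)) ≤ ε₁ ^ 2 := by
      intro y hy
      have := diff_identity q y
      calc (∫ ξ, F (y, ξ)) = ∫ x : ℝ, (‖q (x + y) - q x‖ ^ 2 : ℝ) := this
        _ ≤ ε₁ ^ 2 := hequi y hy
    calc ∫ y, (∫ ξ, F (y, ξ)) ∂μ
        ≤ ∫ _ in Set.Ioo (0:ℝ) δ, (ε₁ ^ 2) := by
          rw [hμ] at hmarg ⊢
          exact setIntegral_mono_on hmarg (integrableOn_const measure_Ioo_lt_top.ne)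
            measurableSet_Ioo hle
      _ = δ * ε₁ ^ 2 := by
          rw [setIntegral_const, Real.volume_real_Ioo_of_le hδ.le, smul_eq_mul, sub_zero]
  -- lower bound
  set S : Set ℝ := {ξ : ℝ | 2 / δ ≤ |ξ|} with hS
  have hSmeas : MeasurableSet S := measurableSet_le measurable_const measurable_abs
  have hW2_int : Integrable (fun ξ => ∫ y, F (y, ξ) ∂μ) := hF_int.integral_prod_right
  have hW2_eq : ∀ ξ, (∫ y, F (y, ξ) ∂μ) = (∫ y in Set.Ioo (0:ℝ) δ, (2 - 2 * Real.cos (ξ * y))) * Φ ξ := by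
    intro ξ
    rw [hμ]
    rw [show (fun y => F (y, ξ)) = fun y => (2 - 2 * Real.cos (ξ * y)) * Φ ξ from
      funext fun y => by rw [hF]; simp only [norm_w]]
    exact MeasureTheory.integral_mul_const _ _
  have hW2_nn : ∀ ξ, 0 ≤ ∫ y, F (y, ξ) ∂μ := by
    intro ξ
    refine integral_nonneg fun y => ?_
    exact mul_nonneg (by positivity) (hΦ_nn ξ)
  have hB : δ * ∫ ξ in S, Φ ξ ≤ δ * ε₁ ^ 2 := by
    calc δ * ∫ ξ in S, Φ ξ = ∫ ξ in S, δ * Φ ξ := by rw [integral_const_mul]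
      _ ≤ ∫ ξ in S, (∫ y, F (y, ξ) ∂μ) := by
          refine setIntegral_mono_on ((hΦ_int.const_mul δ).integrableOn)
            (hW2_int.integrableOn) hSmeas fun ξ hξ => ?_
          rw [hW2_eq ξ]
          exact mul_le_mul_of_nonneg_right (w2_lower δ ξ hδ hξ) (hΦ_nn ξ)
      _ ≤ ∫ ξ, (∫ y, F (y, ξ) ∂μ) :=
          setIntegral_le_integral hW2_int (Filter.Eventually.of_forall hW2_nn)
      _ = ∫ y, (∫ ξ, F (y, ξ)) ∂μ := hswap.symm
      _ ≤ δ * ε₁ ^ 2 := hA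
  have := le_of_mul_le_mul_left hB hδ
  exact this


lemma rpow_abs_two_mul (σ ξ : ℝ) : |ξ| ^ (2 * σ) = (ξ ^ 2) ^ σ := by
  rw [Real.rpow_mul (abs_nonneg ξ)]
  congr 1
  rw [show ((2:ℝ)) = ((2:ℕ) : ℝ) from by norm_num, Real.rpow_natCast, _root_.sq_abs]

lemma W_le_one {σ κ ξ : ℝ} (hσ : 0 < σ) (hκ : 1 ≤ κ) :
    |ξ| ^ (2 * σ) * (4 * κ ^ 2 + ξ ^ 2) ^ (-σ) ≤ 1 := by
  have hbase : (0:ℝ) < 4 * κ ^ 2 + ξ ^ 2 := by nlinarith [sq_nonneg ξ]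
  rw [rpow_abs_two_mul σ ξ, Real.rpow_neg hbase.le]
  rw [mul_inv_le_iff₀ (Real.rpow_pos_of_pos hbase σ), one_mul]
  exact Real.rpow_le_rpow (sq_nonneg ξ) (by nlinarith [sq_nonneg κ]) hσ.le

lemma W_nonneg {σ κ ξ : ℝ} : 0 ≤ |ξ| ^ (2 * σ) * (4 * κ ^ 2 + ξ ^ 2) ^ (-σ) := by
  positivity

lemma W_small {σ κ ξ R : ℝ} (hσ : 0 < σ) (hκ : 1 ≤ κ) (hR : 0 ≤ R) (hξ : |ξ| ≤ R) :
    |ξ| ^ (2 * σ) * (4 * κ ^ 2 + ξ ^ 2) ^ (-σ) ≤ (R ^ 2) ^ σ * (4 * κ ^ 2) ^ (-σ) := by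
  have hbase : (0:ℝ) < 4 * κ ^ 2 + ξ ^ 2 := by nlinarith [sq_nonneg ξ]
  have h4κ : (0:ℝ) < 4 * κ ^ 2 := by nlinarith
  rw [rpow_abs_two_mul σ ξ, Real.rpow_neg hbase.le, Real.rpow_neg h4κ.le]
  have h1 : (ξ ^ 2) ^ σ ≤ (R ^ 2) ^ σ := by
    refine Real.rpow_le_rpow (sq_nonneg ξ) ?_ hσ.le
    calc ξ ^ 2 = |ξ| ^ 2 := (_root_.sq_abs ξ).symm
      _ ≤ R ^ 2 := by gcongr
  have h2 : ((4 * κ ^ 2 + ξ ^ 2) ^ σ)⁻¹ ≤ ((4 * κ ^ 2) ^ σ)⁻¹ := by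
    refine inv_anti₀ (Real.rpow_pos_of_pos h4κ σ) ?_
    exact Real.rpow_le_rpow h4κ.le (by nlinarith [sq_nonneg ξ]) hσ.le
  exact mul_le_mul h1 h2 (by positivity) (by positivity)

lemma W_cont {σ κ : ℝ} (hσ : 0 < σ) (hκ : 1 ≤ κ) :
    Continuous fun ξ : ℝ => |ξ| ^ (2 * σ) * (4 * κ ^ 2 + ξ ^ 2) ^ (-σ) := by
  apply Continuous.mul
  · exact continuous_abs.rpow_const (fun x => Or.inr (by positivity))
  · refine Continuous.rpow_const (by continuity) fun ξ => Or.inl ?_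
    nlinarith [sq_nonneg ξ]

lemma A_tendsto {σ : ℝ} (R : ℝ) (hσ : 0 < σ) :
    Tendsto (fun κ : ℝ => (R ^ 2) ^ σ * (4 * κ ^ 2) ^ (-σ)) atTop (𝓝 0) := by
  have h1 : Tendsto (fun κ : ℝ => 4 * κ ^ 2) atTop atTop :=
    (tendsto_pow_atTop (two_ne_zero)).const_mul_atTop (by norm_num)
  have h2 : Tendsto (fun κ : ℝ => (4 * κ ^ 2) ^ (-σ)) atTop (𝓝 0) :=
    (tendsto_rpow_neg_atTop hσ).comp h1
  have := h2.const_mul ((R ^ 2) ^ σ)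
  simpa using this


/-- **Equicontinuity and the `E^σ_{σ,κ}` norms.** If `Q` is an `L²`-bounded,
`L²`-equicontinuous family of Schwartz functions and `σ > 0`, then
`sup_{q∈Q} ∫ |ξ|^{2σ}(4κ²+ξ²)^{-σ}|q̂(ξ)|² dξ → 0` as `κ → ∞`. -/
theorem stmt_13 (σ : ℝ) (hσ : 0 < σ) (Q : Set (SchwartzMap ℝ ℂ))
    (hbdd : ∃ M : ℝ, ∀ q ∈ Q, (∫ x : ℝ, ‖q x‖ ^ 2) ≤ M)
    (hequi : ∀ ε : ℝ, 0 < ε → ∃ δ : ℝ, 0 < δ ∧ ∀ q ∈ Q, ∀ y : ℝ, |y| < δ →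
      Real.sqrt (∫ x : ℝ, ‖q (x + y) - q x‖ ^ 2) < ε) :
    ∀ ε : ℝ, 0 < ε → ∃ κ₀ : ℝ, ∀ κ : ℝ, κ₀ ≤ κ → ∀ q ∈ Q,
      (∫ ξ : ℝ, |ξ| ^ (2 * σ) * (4 * κ ^ 2 + ξ ^ 2) ^ (-σ) * ‖fhat (⇑q) ξ‖ ^ 2) < ε := by
  intro ε hε
  obtain ⟨M, hM⟩ := hbdd
  set M' : ℝ := max M 0 + 1 with hM'
  have hM'pos : 0 < M' := by positivity
  set ε₁ : ℝ := Real.sqrt (ε / 4) with hε₁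
  have hε₁pos : 0 < ε₁ := Real.sqrt_pos.2 (by linarith)
  have hε₁sq : ε₁ ^ 2 = ε / 4 := Real.sq_sqrt (by linarith)
  obtain ⟨δ, hδpos, hδ⟩ := hequi ε₁ hε₁pos
  set R : ℝ := 2 / δ with hR
  have hRpos : 0 < R := by positivity
  set η : ℝ := ε / (4 * M') with hη
  have hηpos : 0 < η := by positivity
  -- choose κ₀
  have hev : ∀ᶠ κ : ℝ in atTop, (R ^ 2) ^ σ * (4 * κ ^ 2) ^ (-σ) < η :=
    (A_tendsto R hσ).eventually_lt_const hηpos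
  obtain ⟨κ₀', hκ₀'⟩ := Filter.eventually_atTop.1 (hev.and (eventually_ge_atTop (1:ℝ)))
  refine ⟨κ₀', fun κ hκ q hq => ?_⟩
  obtain ⟨hκA, hκ1⟩ := hκ₀' κ hκ
  -- basic facts about q
  set Φ : ℝ → ℝ := fun ξ => (‖fhat ⇑q ξ‖ ^ 2 : ℝ) with hΦ
  have hΦ_int : Integrable Φ := integrable_fhat_sq q
  have hΦ_nn : ∀ ξ, 0 ≤ Φ ξ := fun ξ => by positivity
  have hG_int : Integrable (𝓕 ⇑q) := by
    have := (FourierTransform.fourierCLE ℂ (SchwartzMap ℝ ℂ) q).integrable (μ := volume)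
    rwa [FourierTransform.fourierCLE_apply, SchwartzMap.fourier_coe] at this
  have hplanch : ∫ ξ : ℝ, Φ ξ = ∫ x : ℝ, (‖q x‖ ^ 2 : ℝ) :=
    planch_fhat ⇑q q.continuous q.integrable hG_int
  have hΦ_total : ∫ ξ : ℝ, Φ ξ ≤ M' := by
    rw [hplanch]
    calc ∫ x : ℝ, (‖q x‖ ^ 2 : ℝ) ≤ M := hM q hq
      _ ≤ M' := by rw [hM']; nlinarith [le_max_left M 0]
  -- tail estimate
  have htail : ∫ ξ in {ξ : ℝ | R ≤ |ξ|}, Φ ξ ≤ ε / 4 := by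
    rw [← hε₁sq]
    refine tail_bound q δ ε₁ hδpos hε₁pos.le fun y hy => ?_
    have h1 : |y| < δ := by
      rw [abs_of_pos hy.1]; exact hy.2
    have h2 := hδ q hq y h1
    have h3 : (0:ℝ) ≤ ∫ x : ℝ, (‖q (x + y) - q x‖ ^ 2 : ℝ) :=
      integral_nonneg fun x => by positivity
    nlinarith [Real.sq_sqrt h3, Real.sqrt_nonneg (∫ x : ℝ, (‖q (x + y) - q x‖ ^ 2 : ℝ))]
  -- integrability of the full integrand
  set W : ℝ → ℝ := fun ξ => |ξ| ^ (2 * σ) * (4 * κ ^ 2 + ξ ^ 2) ^ (-σ) with hW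
  have hWΦ_int : Integrable (fun ξ => W ξ * Φ ξ) := by
    refine hΦ_int.mono' (((W_cont hσ hκ1).mul ((cont_fhat q).norm.pow 2)).aestronglyMeasurable) ?_
    filter_upwards with ξ
    rw [Real.norm_eq_abs, _root_.abs_of_nonneg (mul_nonneg W_nonneg (hΦ_nn ξ))]
    calc W ξ * Φ ξ ≤ 1 * Φ ξ := mul_le_mul_of_nonneg_right (W_le_one hσ hκ1) (hΦ_nn ξ)
      _ = Φ ξ := one_mul _
  have hSmeas : MeasurableSet {ξ : ℝ | R ≤ |ξ|} :=
    measurableSet_le measurable_const measurable_abs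
  -- split the integral
  have hsplit : (∫ ξ : ℝ, W ξ * Φ ξ)
      = (∫ ξ in {ξ : ℝ | R ≤ |ξ|}, W ξ * Φ ξ) + ∫ ξ in {ξ : ℝ | R ≤ |ξ|}ᶜ, W ξ * Φ ξ :=
    (integral_add_compl hSmeas hWΦ_int).symm
  have hterm1 : (∫ ξ in {ξ : ℝ | R ≤ |ξ|}, W ξ * Φ ξ) ≤ ε / 4 := by
    refine le_trans ?_ htail
    refine setIntegral_mono_on hWΦ_int.integrableOn hΦ_int.integrableOn hSmeas fun ξ _ => ?_
    calc W ξ * Φ ξ ≤ 1 * Φ ξ := mul_le_mul_of_nonneg_right (W_le_one hσ hκ1) (hΦ_nn ξ)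
      _ = Φ ξ := one_mul _
  have hterm2 : (∫ ξ in {ξ : ℝ | R ≤ |ξ|}ᶜ, W ξ * Φ ξ) ≤ ε / 4 := by
    have hA : ∀ ξ ∈ {ξ : ℝ | R ≤ |ξ|}ᶜ, W ξ * Φ ξ ≤ ((R ^ 2) ^ σ * (4 * κ ^ 2) ^ (-σ)) * Φ ξ := by
      intro ξ hξ
      have : |ξ| ≤ R := le_of_lt (by simpa [not_le] using hξ)
      exact mul_le_mul_of_nonneg_right (W_small hσ hκ1 hRpos.le this) (hΦ_nn ξ)
    calc (∫ ξ in {ξ : ℝ | R ≤ |ξ|}ᶜ, W ξ * Φ ξ)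
        ≤ ∫ ξ in {ξ : ℝ | R ≤ |ξ|}ᶜ, ((R ^ 2) ^ σ * (4 * κ ^ 2) ^ (-σ)) * Φ ξ := by
          refine setIntegral_mono_on hWΦ_int.integrableOn
            ((hΦ_int.const_mul _).integrableOn) hSmeas.compl hA
      _ = ((R ^ 2) ^ σ * (4 * κ ^ 2) ^ (-σ)) * ∫ ξ in {ξ : ℝ | R ≤ |ξ|}ᶜ, Φ ξ := by
          rw [integral_const_mul]
      _ ≤ η * M' := by
          refine mul_le_mul hκA.le ?_ ?_ hηpos.le
          · exact le_trans (setIntegral_le_integral hΦ_int (Filter.Eventually.of_forall hΦ_nn))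
              hΦ_total
          · exact setIntegral_nonneg hSmeas.compl fun ξ _ => hΦ_nn ξ
      _ = ε / 4 := by
          rw [hη]; field_simp
  calc (∫ ξ : ℝ, |ξ| ^ (2 * σ) * (4 * κ ^ 2 + ξ ^ 2) ^ (-σ) * ‖fhat (⇑q) ξ‖ ^ 2)
      = ∫ ξ : ℝ, W ξ * Φ ξ := by
        refine integral_congr_ae (.of_forall fun ξ => ?_)
        rw [hW, hΦ]
    _ ≤ ε / 4 + ε / 4 := by rw [hsplit]; exact add_le_add hterm1 hterm2
    _ < ε := by linarith
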